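/- arXiv:2011.07612 — 5 statements merged into one kernel-verified Lean document; each statement's English description precedes it below -/
import Mathlib

section
/- Let $U$, $V$, $W$ be disjoint vertex sets with $|V| = n$ and $n/2 \le |U| = |W| = n_0 \le 3n/2$, and let $G$ be a graph in which the pairs $(V,U)$ and $(V,W)$ are $(\varepsilon,d)$-super-regular with $\varepsilon \le d/2$. Define the auxiliary bipartite graph $F$ on $U \cup W$ where $uw$ is an edge if and only if $u$ and $w$ have at least $d^2 n/2$ common neighbours in $V$ in the graph $G$. Then $F$ has minimum degree at least $(1-\varepsilon)n_0$. -/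
open Finset

/-- The density of a pair of vertex sets. -/
noncomputable def edgeDens {α : Type} [Fintype α] [DecidableEq α]
    (G : SimpleGraph α) [DecidableRel G.Adj] (X Y : Finset α) : ℝ :=
  (∑ v ∈ X, (((G.neighborFinset v) ∩ Y).card : ℝ)) / ((X.card : ℝ) * (Y.card : ℝ))

lemma double_count {α : Type} [Fintype α] [DecidableEq α]
    (G : SimpleGraph α) [DecidableRel G.Adj] (X B : Finset α) :
    ∑ v ∈ X, (((G.neighborFinset v) ∩ B).card : ℝ)
      = ∑ w ∈ B, (((G.neighborFinset w) ∩ X).card : ℝ) := by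
  have h : ∀ (Q : Finset α), ∀ v, (((G.neighborFinset v) ∩ Q).card : ℝ)
      = ∑ w ∈ Q, if G.Adj v w then (1:ℝ) else 0 := by
    intro Q v
    rw [Finset.sum_boole]
    have : Q.filter (fun w => G.Adj v w) = (G.neighborFinset v) ∩ Q := by
      ext w; simp [and_comm]
    rw [this]
  simp only [h]
  rw [Finset.sum_comm]
  apply Finset.sum_congr rfl; intro w _
  apply Finset.sum_congr rfl; intro v _
  simp [G.adj_comm]

lemma aux_lemma {α : Type} [Fintype α] [DecidableEq α]
    (G : SimpleGraph α) [DecidableRel G.Adj]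
    (V T : Finset α) (n : ℕ) (ε d : ℝ)
    (hVcard : V.card = n) (hn2 : 2 * T.card ≤ 3 * n)
    (hε : 0 < ε) (hεd : ε ≤ d / 2)
    (hreg : ∀ X ⊆ V, ∀ Y ⊆ T, ε * V.card ≤ X.card → ε * T.card ≤ Y.card →
      d ≤ edgeDens G X Y)
    (x : α) (hx : d * V.card ≤ (((G.neighborFinset x) ∩ V).card : ℝ)) :
    (1 - ε) * T.card ≤
      ((T.filter (fun t => d ^ 2 * n / 2 ≤
        (((G.neighborFinset x) ∩ (G.neighborFinset t) ∩ V).card : ℝ))).card : ℝ) := by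
  classical
  have hd : 0 < d := lt_of_lt_of_le hε (hεd.trans (by linarith [hεd, hε]))
  by_contra hcon
  push_neg at hcon
  set p := fun t => d ^ 2 * n / 2 ≤
        (((G.neighborFinset x) ∩ (G.neighborFinset t) ∩ V).card : ℝ) with hp
  set B := T.filter (fun t => ¬ p t) with hB
  have hsplit : (T.filter p).card + B.card = T.card :=
    Finset.card_filter_add_card_filter_not _
  have hBcard : ε * T.card < B.card := by
    have h1 : (T.card : ℝ) = (T.filter p).card + B.card := by exact_mod_cast hsplit.symm
    nlinarith [hcon]
  have hBpos : 0 < (B.card : ℝ) := lt_of_le_of_lt (by positivity) hBcard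
  have hBT : B ⊆ T := Finset.filter_subset _ _
  have hTpos : 0 < T.card := by
    have := Finset.card_le_card hBT
    have : 0 < B.card := by exact_mod_cast hBpos
    omega
  have hnpos : 0 < n := by omega
  set X := (G.neighborFinset x) ∩ V with hX
  have hXV : X ⊆ V := Finset.inter_subset_right
  have hXcard : d * n ≤ (X.card : ℝ) := by rw [← hVcard]; exact hx
  have hXpos : 0 < (X.card : ℝ) := by
    have : (0:ℝ) < d * n := by positivity
    linarith
  have hXε : ε * V.card ≤ X.card := by
    rw [hVcard]
    nlinarith [hXcard, (Nat.cast_pos (α := ℝ)).mpr hnpos]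
  have hdens := hreg X hXV B hBT hXε hBcard.le
  rw [edgeDens, double_count] at hdens
  have hsum : ∑ w ∈ B, (((G.neighborFinset w) ∩ X).card : ℝ)
      < ∑ w ∈ B, d ^ 2 * n / 2 := by
    apply Finset.sum_lt_sum_of_nonempty
    · rw [← Finset.card_pos]; exact_mod_cast hBpos
    · intro w hw
      have hw' : ¬ p w := (Finset.mem_filter.mp hw).2
      simp only [hp, not_le] at hw'
      have : (G.neighborFinset w) ∩ X = (G.neighborFinset x) ∩ (G.neighborFinset w) ∩ V := by
        rw [hX]; ext v; simp [Finset.mem_inter]; tauto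
      rw [this]
      exact hw'
  rw [Finset.sum_const, nsmul_eq_mul] at hsum
  have hdenpos : 0 < (X.card : ℝ) * (B.card : ℝ) := by positivity
  rw [le_div_iff₀ hdenpos] at hdens
  have hnr : (0:ℝ) < n := (Nat.cast_pos (α := ℝ)).mpr hnpos
  have h1 : (d * n) * (B.card : ℝ) ≤ (X.card : ℝ) * B.card :=
    mul_le_mul_of_nonneg_right hXcard hBpos.le
  nlinarith [hdens, hsum, h1, hBpos, hd, hnr, mul_pos (mul_pos hd hd) (mul_pos hnr hBpos)]


/-- Let `U,V,W` be disjoint sets with `|V| = n`, `n/2 ≤ |U| = |W| = n₀ ≤ 3n/2`,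
with `(V,U)` and `(V,W)` `(ε,d)`-super-regular, `ε ≤ d/2`. In the auxiliary
bipartite graph `F` on `U ∪ W`, where `uw` is an edge iff `u` and `w` have at
least `d²n/2` common neighbours in `V`, every vertex has degree at least
`(1-ε)n₀`. -/
theorem stmt_10 {α : Type} [Fintype α] [DecidableEq α]
    (G : SimpleGraph α) [DecidableRel G.Adj]
    (U V W : Finset α) (n n0 : ℕ) (ε d : ℝ)
    (hUV : Disjoint U V) (hUW : Disjoint U W) (hVW : Disjoint V W)
    (hVcard : V.card = n) (hUcard : U.card = n0) (hWcard : W.card = n0)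
    (hn1 : n ≤ 2 * n0) (hn2 : 2 * n0 ≤ 3 * n)
    (hε : 0 < ε) (hεd : ε ≤ d / 2)
    -- (V,U) is (ε,d)-super-regular
    (hregVU : ∀ X ⊆ V, ∀ Y ⊆ U, ε * V.card ≤ X.card → ε * U.card ≤ Y.card →
      d ≤ edgeDens G X Y)
    (hdegVU : ∀ v ∈ V, d * U.card ≤ (((G.neighborFinset v) ∩ U).card : ℝ))
    (hdegUV : ∀ u ∈ U, d * V.card ≤ (((G.neighborFinset u) ∩ V).card : ℝ))
    -- (V,W) is (ε,d)-super-regular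
    (hregVW : ∀ X ⊆ V, ∀ Y ⊆ W, ε * V.card ≤ X.card → ε * W.card ≤ Y.card →
      d ≤ edgeDens G X Y)
    (hdegVW : ∀ v ∈ V, d * W.card ≤ (((G.neighborFinset v) ∩ W).card : ℝ))
    (hdegWV : ∀ w ∈ W, d * V.card ≤ (((G.neighborFinset w) ∩ V).card : ℝ)) :
    (∀ u ∈ U, (1 - ε) * n0 ≤
      ((W.filter (fun w => d ^ 2 * n / 2 ≤
        (((G.neighborFinset u) ∩ (G.neighborFinset w) ∩ V).card : ℝ))).card : ℝ)) ∧
    (∀ w ∈ W, (1 - ε) * n0 ≤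
      ((U.filter (fun u => d ^ 2 * n / 2 ≤
        (((G.neighborFinset u) ∩ (G.neighborFinset w) ∩ V).card : ℝ))).card : ℝ)) := by
  constructor
  · intro u hu
    have h := aux_lemma G V W n ε d hVcard (by omega) hε hεd hregVW u (hdegUV u hu)
    rwa [hWcard] at h
  · intro w hw
    have h := aux_lemma G V U n ε d hVcard (by omega) hε hεd hregVU w (hdegWV w hw)
    rw [hUcard] at h
    have heq : (U.filter (fun u => d ^ 2 * n / 2 ≤
        (((G.neighborFinset u) ∩ (G.neighborFinset w) ∩ V).card : ℝ)))
      = (U.filter (fun u => d ^ 2 * n / 2 ≤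
        (((G.neighborFinset w) ∩ (G.neighborFinset u) ∩ V).card : ℝ))) := by
      apply Finset.filter_congr
      intro u _
      rw [Finset.inter_comm (G.neighborFinset u)]
    rw [heq]
    exact h
end

section
/- Let $R$ be a graph on $t$ vertices with minimum degree $\delta(R) \ge (\alpha-2d)t$ where $1/3 - d/3 \le \alpha \le 1/3$ and $d > 0$ small, and let $M_1$ be a maximum matching in $R$ with $|M_1| \ge (\alpha+2d)t$. Then the set $V(R) \setminus V(M_1)$ is independent, has size at most $(\alpha-3d)t$, and there exists a matching $M_2$, vertex-disjoint edges each joining a vertex of $V(R)\setminus V(M_1)$ to a vertex of $V(M_1)$, covering all of $V(R) \setminus V(M_1)$. -/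
open Finset

/-- Let `R` be a graph on `t` vertices with `δ(R) ≥ (α-2d)t`, where
`1/3 - d/3 ≤ α ≤ 1/3` and `d > 0` is small, and let `M₁` be a maximum matching
with `|M₁| ≥ (α+2d)t`. Then the set of uncovered vertices is independent, has
size at most `(α-3d)t`, and there is a matching `M₂`, each of whose edges joins
an uncovered vertex to a vertex of `V(M₁)`, covering all uncovered vertices. -/
theorem stmt_11 {V : Type} [Fintype V] [DecidableEq V]
    (R : SimpleGraph V) [DecidableRel R.Adj]
    (t : ℕ) (ht : Fintype.card V = t)
    (α d : ℝ) (hd0 : 0 < d) (hdsmall : d ≤ 1 / 100)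
    (hα1 : 1 / 3 - d / 3 ≤ α) (hα2 : α ≤ 1 / 3)
    (hδ : ∀ v : V, (α - 2 * d) * t ≤ (R.degree v : ℝ))
    (M1 : Finset (Sym2 V)) (hM1e : M1 ⊆ R.edgeFinset)
    (hM1m : (M1 : Set (Sym2 V)).Pairwise (fun e f => ∀ v : V, v ∈ e → v ∉ f))
    (hmax : ∀ M' : Finset (Sym2 V), M' ⊆ R.edgeFinset →
      ((M' : Set (Sym2 V)).Pairwise (fun e f => ∀ v : V, v ∈ e → v ∉ f)) →
      M'.card ≤ M1.card)
    (hM1card : (α + 2 * d) * t ≤ (M1.card : ℝ)) :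
    (∀ u v : V, (∀ e ∈ M1, u ∉ e) → (∀ e ∈ M1, v ∉ e) → ¬ R.Adj u v) ∧
    (((Finset.univ.filter (fun v : V => ∀ e ∈ M1, v ∉ e)).card : ℝ)
        ≤ (α - 3 * d) * t) ∧
    (∃ M2 : Finset (Sym2 V), M2 ⊆ R.edgeFinset ∧
      ((M2 : Set (Sym2 V)).Pairwise (fun e f => ∀ v : V, v ∈ e → v ∉ f)) ∧
      (∀ e ∈ M2, ∃ x y : V, e = s(x, y) ∧ (∀ f ∈ M1, x ∉ f) ∧ (∃ f ∈ M1, y ∈ f)) ∧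
      (∀ v : V, (∀ e ∈ M1, v ∉ e) → ∃ e ∈ M2, v ∈ e)) := by
  classical
  -- Part 1: independence of uncovered vertices
  have hind : ∀ u v : V, (∀ e ∈ M1, u ∉ e) → (∀ e ∈ M1, v ∉ e) → ¬ R.Adj u v := by
    intro u v hu hv hadj
    have hnm : s(u, v) ∉ M1 := fun h => hu _ h (by simp)
    have hsub : insert s(u, v) M1 ⊆ R.edgeFinset := by
      intro e he
      rcases Finset.mem_insert.mp he with rfl | h
      · simpa [SimpleGraph.mem_edgeFinset] using hadj
      · exact hM1e h
    have hpair : ((insert s(u, v) M1 : Finset (Sym2 V)) : Set (Sym2 V)).Pairwise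
        (fun e f => ∀ w : V, w ∈ e → w ∉ f) := by
      rw [Finset.coe_insert]
      refine hM1m.insert ?_
      intro f hf _
      have h1 : ∀ w : V, w ∈ s(u, v) → w ∉ f := by
        intro w hw hwf
        rcases Sym2.mem_iff.mp hw with rfl | rfl
        · exact hu f hf hwf
        · exact hv f hf hwf
      exact ⟨h1, fun w hwf hw => h1 w hw hwf⟩
    have := hmax _ hsub hpair
    rw [Finset.card_insert_of_notMem hnm] at this
    omega
  refine ⟨hind, ?_⟩
  -- Cardinality of uncovered set
  set U : Finset V := Finset.univ.filter (fun v : V => ∀ e ∈ M1, v ∉ e) with hUdef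
  have hcov : (Finset.univ.filter (fun v : V => ∃ e ∈ M1, v ∈ e))
      = M1.biUnion (fun e => Finset.univ.filter (· ∈ e)) := by
    ext v; simp
  have hcard2 : ∀ e ∈ M1, (Finset.univ.filter (· ∈ e)).card = 2 := by
    intro e he
    have hnd : ¬ e.IsDiag :=
      R.not_isDiag_of_mem_edgeSet (SimpleGraph.mem_edgeFinset.mp (hM1e he))
    induction e with
    | _ x y =>
      have hxy : x ≠ y := by simpa [Sym2.isDiag_iff_proj_eq] using hnd
      have : (Finset.univ.filter (· ∈ s(x, y))) = {x, y} := by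
        ext w; simp [Sym2.mem_iff]
      rw [this, Finset.card_insert_of_notMem (by simp [hxy]), Finset.card_singleton]
  have hcovcard : (Finset.univ.filter (fun v : V => ∃ e ∈ M1, v ∈ e)).card = 2 * M1.card := by
    rw [hcov, Finset.card_biUnion]
    · rw [Finset.sum_congr rfl hcard2]
      simp [Nat.mul_comm]
    · intro e he f hf hef
      rw [Function.onFun, Finset.disjoint_left]
      intro v hv hv'
      exact hM1m he hf hef v (by simpa using hv) (by simpa using hv')
  have hsum : U.card + 2 * M1.card = t := by
    have h1 : U = Finset.univ.filter (fun v : V => ¬ ∃ e ∈ M1, v ∈ e) := by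
      ext v; simp [hUdef]
    rw [h1, ← hcovcard, ← ht]
    rw [add_comm]
    exact Finset.card_filter_add_card_filter_not _
  have ht0 : (0 : ℝ) ≤ (t : ℝ) := Nat.cast_nonneg t
  have hUcard : (U.card : ℝ) ≤ (α - 3 * d) * t := by
    have : (U.card : ℝ) + 2 * (M1.card : ℝ) = (t : ℝ) := by
      exact_mod_cast congrArg (Nat.cast : ℕ → ℝ) hsum
    nlinarith
  refine ⟨hUcard, ?_⟩
  -- Part 3: Hall's theorem
  have hUdeg : ∀ u : V, u ∈ U → (U.card : ℕ) ≤ R.degree u := by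
    intro u hu
    have h1 : (α - 2 * d) * t ≤ (R.degree u : ℝ) := hδ u
    have h2 : (α - 3 * d) * t ≤ (α - 2 * d) * t := by nlinarith
    exact_mod_cast le_trans (le_trans hUcard h2) h1
  have hHall : ∀ s : Finset ↥U, s.card ≤ (s.biUnion (fun u => R.neighborFinset u.val)).card := by
    intro s
    rcases s.eq_empty_or_nonempty with rfl | ⟨u, hu⟩
    · simp
    · have hsub : R.neighborFinset u.val ⊆ s.biUnion (fun u => R.neighborFinset u.val) :=
        Finset.subset_biUnion_of_mem (fun (w : {x // x ∈ U}) => R.neighborFinset w.val) hu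
      calc s.card ≤ U.card := by
            have := Finset.card_le_card (Finset.subset_univ s)
            simpa [Fintype.card_coe] using this
        _ ≤ R.degree u.val := hUdeg u.val u.2
        _ = (R.neighborFinset u.val).card := rfl
        _ ≤ _ := Finset.card_le_card hsub
  obtain ⟨f, hfinj, hfmem⟩ :=
    (Finset.all_card_le_biUnion_card_iff_exists_injective
      (fun u : ↥U => R.neighborFinset u.val)).mp hHall
  have hfadj : ∀ u : ↥U, R.Adj u.val (f u) := by
    intro u; exact (R.mem_neighborFinset _ _).mp (hfmem u)
  have hfcov : ∀ u : ↥U, ∃ e ∈ M1, f u ∈ e := by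
    intro u
    by_contra h
    push_neg at h
    have hu : ∀ e ∈ M1, (u : V) ∉ e := (Finset.mem_filter.mp u.2).2
    exact hind u.val (f u) hu h (hfadj u)
  have hfU : ∀ u : ↥U, f u ∉ U := by
    intro u hmem
    obtain ⟨e, he, hfe⟩ := hfcov u
    have : ∀ e ∈ M1, f u ∉ e := by simpa [hUdef] using hmem
    exact this e he hfe
  refine ⟨U.attach.image (fun u => s(u.val, f u)), ?_, ?_, ?_, ?_⟩
  · intro e he
    simp only [Finset.mem_image, Finset.mem_attach, true_and] at he
    obtain ⟨u, rfl⟩ := he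
    simpa [SimpleGraph.mem_edgeFinset] using hfadj u
  · intro e he e' he' hne w hw hw'
    simp only [Finset.coe_image, Set.mem_image, Finset.mem_coe, Finset.mem_attach] at he he'
    obtain ⟨u, -, rfl⟩ := he
    obtain ⟨u', -, rfl⟩ := he'
    have huu' : u ≠ u' := fun h => hne (by rw [h])
    have hvu : (u : V) ≠ u' := fun h => huu' (Subtype.ext h)
    have hff : f u ≠ f u' := fun h => huu' (hfinj h)
    rcases Sym2.mem_iff.mp hw with rfl | rfl <;>
      rcases Sym2.mem_iff.mp hw' with h | h
    · exact hvu h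
    · exact hfU u' (h ▸ u.2)
    · exact hfU u (h ▸ u'.2)
    · exact hff h
  · intro e he
    simp only [Finset.mem_image, Finset.mem_attach, true_and] at he
    obtain ⟨u, rfl⟩ := he
    exact ⟨u.val, f u, rfl, (Finset.mem_filter.mp u.2).2, hfcov u⟩
  · intro v hv
    have hvU : v ∈ U := Finset.mem_filter.mpr ⟨Finset.mem_univ v, hv⟩
    refine ⟨s(v, f ⟨v, hvU⟩), ?_, by simp⟩
    exact Finset.mem_image.mpr ⟨⟨v, hvU⟩, Finset.mem_attach _ _, rfl⟩
end

section
/- Let $R$ be a graph and $M$ a maximum matching in $R$. Then the set $U = V(R) \setminus V(M)$ is independent, and for every edge $xy \in M$, at least one of $x$, $y$ has at most one neighbour in $U$. -/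
open Finset

/-- If `M` is a maximum matching in `R`, then the set `U` of uncovered vertices
is independent, and for every edge `xy ∈ M`, at least one of `x`, `y` has at
most one neighbour in `U`. -/
theorem stmt_12 {V : Type} [Fintype V] [DecidableEq V]
    (R : SimpleGraph V) [DecidableRel R.Adj]
    (M : Finset (Sym2 V)) (hMe : M ⊆ R.edgeFinset)
    (hMm : (M : Set (Sym2 V)).Pairwise (fun e f => ∀ v : V, v ∈ e → v ∉ f))
    (hmax : ∀ M' : Finset (Sym2 V), M' ⊆ R.edgeFinset →
      ((M' : Set (Sym2 V)).Pairwise (fun e f => ∀ v : V, v ∈ e → v ∉ f)) →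
      M'.card ≤ M.card)
    (U : Finset V) (hU : ∀ v : V, v ∈ U ↔ ∀ e ∈ M, v ∉ e) :
    (∀ u ∈ U, ∀ v ∈ U, ¬ R.Adj u v) ∧
    (∀ x y : V, s(x, y) ∈ M →
      ((R.neighborFinset x) ∩ U).card ≤ 1 ∨ ((R.neighborFinset y) ∩ U).card ≤ 1) := by
  have hU' : ∀ w ∈ U, ∀ e ∈ M, w ∉ e := fun w hw => (hU w).mp hw
  constructor
  · intro u hu v hv hadj
    have hnm : s(u, v) ∉ M := fun h => hU' u hu _ h (Sym2.mem_mk_left u v)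
    have hsub : insert s(u, v) M ⊆ R.edgeFinset := by
      intro e he
      rcases Finset.mem_insert.mp he with h | h
      · subst h; exact SimpleGraph.mem_edgeFinset.mpr ((R.mem_edgeSet).mpr hadj)
      · exact hMe h
    have hpair : ((insert s(u, v) M : Finset (Sym2 V)) : Set (Sym2 V)).Pairwise
        (fun e f => ∀ v : V, v ∈ e → v ∉ f) := by
      have key : ∀ f ∈ M, ∀ w : V, w ∈ s(u, v) → w ∉ f := by
        intro f hf w hw
        rcases Sym2.mem_iff.mp hw with rfl | rfl
        · exact hU' w hu f hf
        · exact hU' w hv f hf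
      intro e he f hf hne
      simp only [Finset.coe_insert, Set.mem_insert_iff, Finset.mem_coe] at he hf
      rcases he with rfl | he <;> rcases hf with rfl | hf
      · exact absurd rfl hne
      · exact key f hf
      · exact fun w hw hw' => key e he w hw' hw
      · exact hMm he hf hne
    have := hmax _ hsub hpair
    rw [Finset.card_insert_of_notMem hnm] at this
    omega
  · intro x y hxy
    by_contra h
    push_neg at h
    obtain ⟨h1, h2⟩ := h
    obtain ⟨u, hu⟩ := Finset.card_pos.mp (by omega : 0 < (R.neighborFinset x ∩ U).card)
    have hvex : 0 < ((R.neighborFinset y ∩ U).erase u).card := by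
      have := Finset.pred_card_le_card_erase (a := u) (s := R.neighborFinset y ∩ U)
      omega
    obtain ⟨v, hv⟩ := Finset.card_pos.mp hvex
    obtain ⟨hvu, hv⟩ := Finset.mem_erase.mp hv
    obtain ⟨hux, huU⟩ := Finset.mem_inter.mp hu
    obtain ⟨hvy, hvU⟩ := Finset.mem_inter.mp hv
    rw [SimpleGraph.mem_neighborFinset] at hux hvy
    have huxy : u ∉ s(x, y) := hU' u huU _ hxy
    have hvxy : v ∉ s(x, y) := hU' v hvU _ hxy
    have hux' : u ≠ x := fun h => huxy (h ▸ Sym2.mem_mk_left x y)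
    have huy' : u ≠ y := fun h => huxy (h ▸ Sym2.mem_mk_right x y)
    have hvx' : v ≠ x := fun h => hvxy (h ▸ Sym2.mem_mk_left x y)
    have hvy' : v ≠ y := fun h => hvxy (h ▸ Sym2.mem_mk_right x y)
    have hxy' : x ≠ y := ((R.mem_edgeSet).mp (SimpleGraph.mem_edgeFinset.mp (hMe hxy))).ne
    set M' : Finset (Sym2 V) := insert s(x, u) (insert s(y, v) (M.erase s(x, y))) with hM'
    have hxuM : s(x, u) ∉ M := fun h => hU' u huU _ h (Sym2.mem_mk_right x u)
    have hyvM : s(y, v) ∉ M := fun h => hU' v hvU _ h (Sym2.mem_mk_right y v)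
    have hne2 : s(x, u) ≠ s(y, v) := by
      intro h
      rw [Sym2.eq_iff] at h
      tauto
    -- disjointness of new edges from old ones
    have keyx : ∀ f ∈ M.erase s(x, y), ∀ w : V, w ∈ s(x, u) → w ∉ f := by
      intro f hf w hw
      obtain ⟨hfne, hfM⟩ := Finset.mem_erase.mp hf
      rcases Sym2.mem_iff.mp hw with rfl | rfl
      · exact hMm hxy hfM (Ne.symm hfne) w (Sym2.mem_mk_left w y)
      · exact hU' w huU f hfM
    have keyy : ∀ f ∈ M.erase s(x, y), ∀ w : V, w ∈ s(y, v) → w ∉ f := by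
      intro f hf w hw
      obtain ⟨hfne, hfM⟩ := Finset.mem_erase.mp hf
      rcases Sym2.mem_iff.mp hw with rfl | rfl
      · exact hMm hxy hfM (Ne.symm hfne) w (Sym2.mem_mk_right x w)
      · exact hU' w hvU f hfM
    have keyxy : ∀ w : V, w ∈ s(x, u) → w ∉ s(y, v) := by
      intro w hw hw'
      rcases Sym2.mem_iff.mp hw with rfl | rfl <;>
        rcases Sym2.mem_iff.mp hw' with h | h <;> tauto
    have hsub : M' ⊆ R.edgeFinset := by
      intro e he
      rcases Finset.mem_insert.mp he with rfl | he
      · exact SimpleGraph.mem_edgeFinset.mpr ((R.mem_edgeSet).mpr hux)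
      rcases Finset.mem_insert.mp he with rfl | he
      · exact SimpleGraph.mem_edgeFinset.mpr ((R.mem_edgeSet).mpr hvy)
      · exact hMe (Finset.mem_of_mem_erase he)
    have hpair : ((M' : Finset (Sym2 V)) : Set (Sym2 V)).Pairwise
        (fun e f => ∀ v : V, v ∈ e → v ∉ f) := by
      intro e he f hf hne
      simp only [hM', Finset.coe_insert, Set.mem_insert_iff, Finset.mem_coe] at he hf
      rcases he with rfl | rfl | he <;> rcases hf with rfl | rfl | hf
      · exact absurd rfl hne
      · exact keyxy
      · exact keyx f hf
      · exact fun w hw hw' => keyxy w hw' hw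
      · exact absurd rfl hne
      · exact keyy f hf
      · exact fun w hw hw' => keyx e he w hw' hw
      · exact fun w hw hw' => keyy e he w hw' hw
      · exact hMm (Finset.mem_of_mem_erase he) (Finset.mem_of_mem_erase hf) hne
    have hle := hmax _ hsub hpair
    have hc1 : s(y, v) ∉ M.erase s(x, y) := fun h => hyvM (Finset.mem_of_mem_erase h)
    have hc2 : s(x, u) ∉ insert s(y, v) (M.erase s(x, y)) := by
      intro h
      rcases Finset.mem_insert.mp h with h | h
      · exact hne2 h
      · exact hxuM (Finset.mem_of_mem_erase h)
    have hcard : M'.card = M.card + 1 := by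
      rw [hM', Finset.card_insert_of_notMem hc2, Finset.card_insert_of_notMem hc1,
        Finset.card_erase_of_mem hxy]
      have : 0 < M.card := Finset.card_pos.mpr ⟨_, hxy⟩
      omega
    omega
end

section
/- Let $R$ be a graph on $t$ vertices, $M$ a maximum matching in $R$, and $U = V(R)\setminus V(M)$. Partition $V(M)$ into sets $X$ and $Y$ by placing, for each edge $xy \in M$, one endpoint with at most one neighbour in $U$ into $X$ and the other into $Y$. Then for every edge $xy$ of $R$ with both endpoints in $X$, letting $x', y' \in Y$ be the vertices matched to $x$ and $y$ respectively, at least one of $x'$, $y'$ has at most one neighbour in $U$. -/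
open Finset

/-- Let `M` be a maximum matching in `R` and `U` the set of uncovered vertices.
Partition `V(M)` into `X` and `Y` so that each edge of `M` has one endpoint in
`X` with at most one neighbour in `U` and the other endpoint in `Y`. Then for
every edge of `R` with both endpoints `x, y ∈ X`, with `x', y' ∈ Y` the matched
partners of `x` and `y`, at least one of `x'`, `y'` has at most one neighbour
in `U`. -/
theorem stmt_13 {V : Type} [Fintype V] [DecidableEq V]
    (R : SimpleGraph V) [DecidableRel R.Adj]
    (M : Finset (Sym2 V)) (hMe : M ⊆ R.edgeFinset)
    (hMm : (M : Set (Sym2 V)).Pairwise (fun e f => ∀ v : V, v ∈ e → v ∉ f))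
    (hmax : ∀ M' : Finset (Sym2 V), M' ⊆ R.edgeFinset →
      ((M' : Set (Sym2 V)).Pairwise (fun e f => ∀ v : V, v ∈ e → v ∉ f)) →
      M'.card ≤ M.card)
    (U : Finset V) (hU : ∀ v : V, v ∈ U ↔ ∀ e ∈ M, v ∉ e)
    (X Y : Finset V) (hXY : Disjoint X Y)
    (hcover : ∀ v : V, v ∈ X ∪ Y ↔ ∃ e ∈ M, v ∈ e)
    (hpair : ∀ x y : V, s(x, y) ∈ M → (x ∈ X ∧ y ∈ Y) ∨ (x ∈ Y ∧ y ∈ X))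
    (hXdeg : ∀ x ∈ X, ((R.neighborFinset x) ∩ U).card ≤ 1) :
    ∀ x ∈ X, ∀ y ∈ X, R.Adj x y →
      ∀ x' y' : V, s(x, x') ∈ M → s(y, y') ∈ M →
        ((R.neighborFinset x') ∩ U).card ≤ 1 ∨
        ((R.neighborFinset y') ∩ U).card ≤ 1 := by
  intro x hxX y hyX hxy x' y' hxx' hyy'
  by_contra hcon
  push_neg at hcon
  obtain ⟨hcx, hcy⟩ := hcon
  classical
  have hdisj : ∀ v ∈ X, v ∉ Y := fun v hv => Finset.disjoint_left.mp hXY hv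
  have hx'Y : x' ∈ Y := by
    rcases hpair x x' hxx' with ⟨_, h⟩ | ⟨h, _⟩
    · exact h
    · exact absurd h (hdisj x hxX)
  have hy'Y : y' ∈ Y := by
    rcases hpair y y' hyy' with ⟨_, h⟩ | ⟨h, _⟩
    · exact h
    · exact absurd h (hdisj y hyX)
  obtain ⟨x'', hx''⟩ := Finset.card_pos.mp (by omega : 0 < ((R.neighborFinset x') ∩ U).card)
  obtain ⟨y'', hy''m, hy''ne⟩ := Finset.exists_mem_ne hcy x''
  rw [Finset.mem_inter, SimpleGraph.mem_neighborFinset] at hx'' hy''m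
  obtain ⟨hax, hx''U⟩ := hx''
  obtain ⟨hay, hy''U⟩ := hy''m
  have hUm : ∀ v ∈ U, ∀ e ∈ M, v ∉ e := fun v hv => (hU v).mp hv
  have haxx' : R.Adj x x' := by
    have h := hMe hxx'; rw [SimpleGraph.mem_edgeFinset, SimpleGraph.mem_edgeSet] at h; exact h
  have hayy' : R.Adj y y' := by
    have h := hMe hyy'; rw [SimpleGraph.mem_edgeFinset, SimpleGraph.mem_edgeSet] at h; exact h
  -- distinctness
  have hxyne : x ≠ y := hxy.ne
  have hxx'ne : x ≠ x' := haxx'.ne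
  have hyy'ne : y ≠ y' := hayy'.ne
  have hxy'ne : x ≠ y' := fun h => hdisj x hxX (h ▸ hy'Y)
  have hyx'ne : y ≠ x' := fun h => hdisj y hyX (h ▸ hx'Y)
  have hexx_ne : s(x,x') ≠ s(y,y') := by
    intro h
    rw [Sym2.eq_iff] at h
    tauto
  have hx'y'ne : x' ≠ y' := by
    intro h
    exact hMm (Finset.mem_coe.mpr hxx') (Finset.mem_coe.mpr hyy') hexx_ne x' (by simp) (by simp [h])
  have hx''x : x'' ≠ x := fun h => hUm x'' hx''U s(x,x') hxx' (by simp [h])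
  have hx''x' : x'' ≠ x' := fun h => hUm x'' hx''U s(x,x') hxx' (by simp [h])
  have hx''y : x'' ≠ y := fun h => hUm x'' hx''U s(y,y') hyy' (by simp [h])
  have hx''y' : x'' ≠ y' := fun h => hUm x'' hx''U s(y,y') hyy' (by simp [h])
  have hy''x : y'' ≠ x := fun h => hUm y'' hy''U s(x,x') hxx' (by simp [h])
  have hy''x' : y'' ≠ x' := fun h => hUm y'' hy''U s(x,x') hxx' (by simp [h])
  have hy''y : y'' ≠ y := fun h => hUm y'' hy''U s(y,y') hyy' (by simp [h])
  have hy''y' : y'' ≠ y' := fun h => hUm y'' hy''U s(y,y') hyy' (by simp [h])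
  set M0 := (M.erase s(x,x')).erase s(y,y') with hM0
  set M' := insert s(x,y) (insert s(x',x'') (insert s(y',y'') M0)) with hM'
  have hM0mem : ∀ e ∈ M0, e ∈ M ∧ e ≠ s(x,x') ∧ e ≠ s(y,y') := by
    intro e he
    simp only [hM0, Finset.mem_erase] at he
    exact ⟨he.2.2, he.2.1, he.1⟩
  -- key: for e ∈ M0, none of the six vertices lie in e
  have hkey : ∀ e ∈ M0, x ∉ e ∧ y ∉ e ∧ x' ∉ e ∧ y' ∉ e ∧ x'' ∉ e ∧ y'' ∉ e := by
    intro e he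
    obtain ⟨heM, he1, he2⟩ := hM0mem e he
    refine ⟨?_, ?_, ?_, ?_, ?_, ?_⟩
    · exact hMm (Finset.mem_coe.mpr hxx') (Finset.mem_coe.mpr heM) (Ne.symm he1) x (by simp)
    · exact hMm (Finset.mem_coe.mpr hyy') (Finset.mem_coe.mpr heM) (Ne.symm he2) y (by simp)
    · exact hMm (Finset.mem_coe.mpr hxx') (Finset.mem_coe.mpr heM) (Ne.symm he1) x' (by simp)
    · exact hMm (Finset.mem_coe.mpr hyy') (Finset.mem_coe.mpr heM) (Ne.symm he2) y' (by simp)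
    · exact hUm x'' hx''U e heM
    · exact hUm y'' hy''U e heM
  have hM'e : M' ⊆ R.edgeFinset := by
    intro e he
    simp only [hM', Finset.mem_insert] at he
    rcases he with rfl | rfl | rfl | he
    · rw [SimpleGraph.mem_edgeFinset, SimpleGraph.mem_edgeSet]; exact hxy
    · rw [SimpleGraph.mem_edgeFinset, SimpleGraph.mem_edgeSet]; exact hax
    · rw [SimpleGraph.mem_edgeFinset, SimpleGraph.mem_edgeSet]; exact hay
    · exact hMe ((hM0mem e he).1)
  have hsym : Symmetric (fun e f : Sym2 V => ∀ v : V, v ∈ e → v ∉ f) :=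
    fun e f h v hvf hve => h v hve hvf
  have hM0p : (↑M0 : Set (Sym2 V)).Pairwise (fun e f => ∀ v : V, v ∈ e → v ∉ f) :=
    hMm.mono (fun e he => Finset.mem_coe.mpr ((hM0mem e (Finset.mem_coe.mp he)).1))
  have hpw : (↑M' : Set (Sym2 V)).Pairwise (fun e f => ∀ v : V, v ∈ e → v ∉ f) := by
    haveI : Std.Symm (fun e f : Sym2 V => ∀ v : V, v ∈ e → v ∉ f) := ⟨fun a b h => hsym h⟩
    rw [hM', Finset.coe_insert, Set.pairwise_insert_of_symm,
        Finset.coe_insert, Set.pairwise_insert_of_symm,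
        Finset.coe_insert, Set.pairwise_insert_of_symm]
    refine ⟨⟨⟨hM0p, ?_⟩, ?_⟩, ?_⟩
    · intro b hb _ v hv
      obtain ⟨_, _, _, hy'0, _, hy''0⟩ := hkey b (Finset.mem_coe.mp hb)
      rcases Sym2.mem_iff.mp hv with h | h <;> rw [h]
      · exact hy'0
      · exact hy''0
    · intro b hb _ v hv
      rcases Set.mem_insert_iff.mp hb with rfl | hb
      · intro hvf
        rcases Sym2.mem_iff.mp hv with h | h <;> rcases Sym2.mem_iff.mp hvf with h2 | h2
        · exact hx'y'ne (h.symm.trans h2)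
        · exact (Ne.symm hy''x') (h.symm.trans h2)
        · exact hx''y' (h.symm.trans h2)
        · exact (Ne.symm hy''ne) (h.symm.trans h2)
      · obtain ⟨_, _, hx'0, _, hx''0, _⟩ := hkey b (Finset.mem_coe.mp hb)
        rcases Sym2.mem_iff.mp hv with h | h <;> rw [h]
        · exact hx'0
        · exact hx''0
    · intro b hb _ v hv
      rcases Set.mem_insert_iff.mp hb with rfl | hb
      · intro hvf
        rcases Sym2.mem_iff.mp hv with h | h <;> rcases Sym2.mem_iff.mp hvf with h2 | h2
        · exact hxx'ne (h.symm.trans h2)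
        · exact (Ne.symm hx''x) (h.symm.trans h2)
        · exact hyx'ne (h.symm.trans h2)
        · exact (Ne.symm hx''y) (h.symm.trans h2)
      · rcases Set.mem_insert_iff.mp hb with rfl | hb
        · intro hvf
          rcases Sym2.mem_iff.mp hv with h | h <;> rcases Sym2.mem_iff.mp hvf with h2 | h2
          · exact hxy'ne (h.symm.trans h2)
          · exact (Ne.symm hy''x) (h.symm.trans h2)
          · exact hyy'ne (h.symm.trans h2)
          · exact (Ne.symm hy''y) (h.symm.trans h2)
        · obtain ⟨hx0, hy0, _, _, _, _⟩ := hkey b (Finset.mem_coe.mp hb)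
          rcases Sym2.mem_iff.mp hv with h | h <;> rw [h]
          · exact hx0
          · exact hy0
  -- new edges not in M0 / previous inserts
  have hnm3 : s(y',y'') ∉ M0 := fun h => (hkey _ h).2.2.2.1 (by simp)
  have hnm2 : s(x',x'') ∉ insert s(y',y'') M0 := by
    intro h
    rcases Finset.mem_insert.mp h with h | h
    · rw [Sym2.eq_iff] at h; tauto
    · exact (hkey _ h).2.2.1 (by simp)
  have hnm1 : s(x,y) ∉ insert s(x',x'') (insert s(y',y'') M0) := by
    intro h
    rcases Finset.mem_insert.mp h with h | h
    · rw [Sym2.eq_iff] at h; tauto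
    rcases Finset.mem_insert.mp h with h | h
    · rw [Sym2.eq_iff] at h; tauto
    · exact (hkey _ h).1 (by simp)
  have hyerase : s(y,y') ∈ M.erase s(x,x') := Finset.mem_erase.mpr ⟨Ne.symm hexx_ne, hyy'⟩
  have hMcard : 2 ≤ M.card := Finset.one_lt_card.mpr ⟨_, hxx', _, hyy', hexx_ne⟩
  have hc0 : M0.card = M.card - 2 := by
    rw [hM0, Finset.card_erase_of_mem hyerase, Finset.card_erase_of_mem hxx']; omega
  have hcM' : M'.card = M.card + 1 := by
    rw [hM', Finset.card_insert_of_notMem hnm1, Finset.card_insert_of_notMem hnm2,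
        Finset.card_insert_of_notMem hnm3, hc0]
    omega
  have := hmax M' hM'e hpw
  omega
end

section
/- For any $d > 0$ there exists $\varepsilon > 0$ such that every $(\varepsilon,d)$-super-regular bipartite pair $(U,V)$ with $|U| = |V|$ contains a perfect matching. -/
open Finset

/-- For any `d > 0` there exists `ε > 0` such that every `(ε,d)`-super-regular
bipartite pair `(U,V)` with `|U| = |V|` contains a perfect matching. -/
theorem stmt_14 (d : ℝ) (hd : 0 < d) :
    ∃ ε : ℝ, 0 < ε ∧
      ∀ {α : Type} [Fintype α] [DecidableEq α]
        (G : SimpleGraph α) [DecidableRel G.Adj] (U V : Finset α),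
        Disjoint U V → U.card = V.card →
        (∀ X ⊆ U, ∀ Y ⊆ V, ε * U.card ≤ X.card → ε * V.card ≤ Y.card →
          d ≤ (∑ v ∈ X, (((G.neighborFinset v) ∩ Y).card : ℝ)) /
            ((X.card : ℝ) * (Y.card : ℝ))) →
        (∀ u ∈ U, d * V.card ≤ (((G.neighborFinset u) ∩ V).card : ℝ)) →
        (∀ v ∈ V, d * U.card ≤ (((G.neighborFinset v) ∩ U).card : ℝ)) →
        ∃ f : α → α, Set.InjOn f U ∧ (∀ u ∈ U, f u ∈ V ∧ G.Adj u (f u)) ∧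
          ∀ v ∈ V, ∃ u ∈ U, f u = v := by
  classical
  refine ⟨d, hd, ?_⟩
  intro α _ _ G _ U V hdis hcard hreg hdegU hdegV
  set t : {x // x ∈ U} → Finset α := fun u => G.neighborFinset u.1 ∩ V with ht
  have hall : ∀ s : Finset {x // x ∈ U}, s.card ≤ (s.biUnion t).card := by
    intro s
    rcases s.eq_empty_or_nonempty with rfl | ⟨u, hu⟩
    · simp
    set N := s.biUnion t with hN
    have hNV : N ⊆ V := by
      intro x hx
      simp only [hN, mem_biUnion] at hx
      obtain ⟨a, -, hx⟩ := hx
      exact (mem_inter.mp hx).2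
    set S := s.image Subtype.val with hS
    have hSU : S ⊆ U := by
      intro x hx
      simp only [hS, mem_image] at hx
      obtain ⟨a, -, rfl⟩ := hx
      exact a.2
    have hScard : S.card = s.card := card_image_of_injective _ Subtype.val_injective
    by_cases hA : (s.card : ℝ) < d * U.card
    · have h1 : d * V.card ≤ ((G.neighborFinset u.1 ∩ V).card : ℝ) := hdegU u.1 u.2
      have h2 : ((G.neighborFinset u.1 ∩ V).card : ℝ) ≤ (N.card : ℝ) := by
        exact_mod_cast card_le_card (subset_biUnion_of_mem t hu)
      have : (s.card : ℝ) < (N.card : ℝ) := by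
        rw [hcard] at hA; linarith
      exact_mod_cast this.le
    push_neg at hA
    by_contra hcon
    push_neg at hcon
    have hNlt : N.card < s.card := hcon
    set Y := V \ N with hY
    have hNle : N.card ≤ V.card := card_le_card hNV
    have hYcard : (Y.card : ℝ) = (V.card : ℝ) - N.card := by
      rw [hY, card_sdiff_of_subset hNV]; push_cast [hNle]; ring
    by_cases hB : d * V.card ≤ (Y.card : ℝ)
    · have hreg' := hreg S hSU Y sdiff_subset (by rw [hScard]; exact hA) hB
      have hzero : ∀ v ∈ S, ((G.neighborFinset v ∩ Y).card : ℝ) = 0 := by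
        intro v hv
        simp only [hS, mem_image] at hv
        obtain ⟨a, ha, rfl⟩ := hv
        have hE : G.neighborFinset a.1 ∩ Y = ∅ := by
          apply eq_empty_of_forall_notMem
          intro x hx
          rw [mem_inter] at hx
          have hx1 : x ∈ N :=
            mem_biUnion.mpr ⟨a, ha, mem_inter.mpr ⟨hx.1, (mem_sdiff.mp hx.2).1⟩⟩
          exact (mem_sdiff.mp hx.2).2 hx1
        rw [hE]; simp
      rw [Finset.sum_congr rfl hzero] at hreg'
      simp only [Finset.sum_const_zero, zero_div] at hreg'
      linarith
    push_neg at hB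
    have hVN : V ⊆ N := by
      intro v hv
      have hdv := hdegV v hv
      have hSle : S.card ≤ U.card := card_le_card hSU
      have hUS : ((U \ S).card : ℝ) = (U.card : ℝ) - S.card := by
        rw [card_sdiff_of_subset hSU]; push_cast [hSle]; ring
      have hkey : ((U \ S).card : ℝ) < ((G.neighborFinset v ∩ U).card : ℝ) := by
        have h3 : (N.card : ℝ) < (S.card : ℝ) := by exact_mod_cast hScard ▸ hNlt
        have h4 : (U.card : ℝ) = (V.card : ℝ) := by exact_mod_cast hcard
        rw [hUS]
        calc (U.card : ℝ) - S.card < (V.card : ℝ) - N.card := by linarith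
          _ = (Y.card : ℝ) := hYcard.symm
          _ < d * V.card := hB
          _ = d * U.card := by rw [h4]
          _ ≤ _ := hdv
      have hne : ((G.neighborFinset v ∩ U) ∩ S).Nonempty := by
        by_contra hemp
        rw [not_nonempty_iff_eq_empty] at hemp
        have hsub : G.neighborFinset v ∩ U ⊆ U \ S := by
          intro x hx
          rw [mem_sdiff]
          refine ⟨(mem_inter.mp hx).2, fun hxS => ?_⟩
          have : x ∈ (G.neighborFinset v ∩ U) ∩ S := mem_inter.mpr ⟨hx, hxS⟩
          simp [hemp] at this
        have := card_le_card hsub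
        have : ((G.neighborFinset v ∩ U).card : ℝ) ≤ ((U \ S).card : ℝ) := by
          exact_mod_cast this
        linarith
      obtain ⟨u', hu'⟩ := hne
      rw [mem_inter, mem_inter] at hu'
      obtain ⟨⟨hadj, hu'U⟩, hu'S⟩ := hu'
      simp only [hS, mem_image] at hu'S
      obtain ⟨a, ha, rfl⟩ := hu'S
      refine mem_biUnion.mpr ⟨a, ha, mem_inter.mpr ⟨?_, hv⟩⟩
      rw [SimpleGraph.mem_neighborFinset] at hadj ⊢
      exact hadj.symm
    have : V.card ≤ N.card := card_le_card hVN
    have : s.card ≤ U.card := hScard ▸ card_le_card hSU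
    omega
  obtain ⟨f, hfinj, hft⟩ := (Finset.all_card_le_biUnion_card_iff_exists_injective t).mp hall
  set g : α → α := fun a => if h : a ∈ U then f ⟨a, h⟩ else a with hg
  have hgadj : ∀ u ∈ U, g u ∈ V ∧ G.Adj u (g u) := by
    intro u hu
    have := hft ⟨u, hu⟩
    rw [ht, mem_inter, SimpleGraph.mem_neighborFinset] at this
    simp only [hg, dif_pos hu]
    exact ⟨this.2, this.1⟩
  have hginj : Set.InjOn g U := by
    intro x hx y hy hxy
    simp only [hg, dif_pos (mem_coe.mp hx), dif_pos (mem_coe.mp hy)] at hxy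
    exact congrArg Subtype.val (hfinj hxy)
  have himg : U.image g = V := by
    apply eq_of_subset_of_card_le
    · intro x hx
      obtain ⟨u, hu, rfl⟩ := mem_image.mp hx
      exact (hgadj u hu).1
    · rw [card_image_of_injOn hginj, hcard]
  refine ⟨g, hginj, hgadj, ?_⟩
  intro v hv
  rw [← himg] at hv
  obtain ⟨u, hu, rfl⟩ := mem_image.mp hv
  exact ⟨u, hu, rfl⟩
end
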